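/- Let U be a Chalker–Coddington unitary whose scattering matrices S_z = q_z [[r_z, −t_z],[conj(t_z), conj(r_z)]] satisfy 0 < c₁ < |r_z| < c₂ < 1 for all z ∈ ℤ×2ℤ and some constants c₁, c₂ ∈ (0,1) (in particular this holds for the critical model with |r_z| = |t_z| = 1/√2 and arbitrary phases). Then there exists an orthogonal projection P on ℓ²(ℤ²; ℂ) such that the flux Φ := U*PU − P has finite-dimensional eigenspaces ker(Φ − 1) and ker(Φ + 1) with dim ker(Φ − 1) ≠ dim ker(Φ + 1), i.e. ind(Φ) ≠ 0. -/

import Mathlib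

open ContinuousLinearMap
open ComplexConjugate
open scoped ENNReal

noncomputable section

/-- The Hilbert space `ℓ²(ℤ²; ℂ)` of the Chalker–Coddington model. -/
abbrev CCH := lp (fun _ : ℤ × ℤ => ℂ) 2

/-- The canonical basis vector `|j,k⟩`. -/
def ket (p : ℤ × ℤ) : CCH := lp.single 2 p 1

/-- Labels of the scattering matrices: the cell `(false, j, k)` is the even cell
`z = (2j, 2k)`, the cell `(true, j, k)` is the odd cell `z = (2j+1, 2k)`. -/
abbrev Cell := Bool × ℤ × ℤ

local notation "⟪" x ", " y "⟫" => @inner ℂ _ _ x y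

lemma coe_apply_add (f g : CCH) (p : ℤ × ℤ) : (f + g) p = f p + g p := by
  rw [lp.coeFn_add]; rfl

lemma coe_apply_sub (f g : CCH) (p : ℤ × ℤ) : (f - g) p = f p - g p := by
  rw [lp.coeFn_sub]; rfl

lemma coe_apply_smul (c : ℂ) (f : CCH) (p : ℤ × ℤ) : (c • f) p = c * f p := by
  rw [lp.coeFn_smul]; rfl

lemma coe_apply_zero (p : ℤ × ℤ) : (0 : CCH) p = 0 := rfl

lemma ket_apply (p q : ℤ × ℤ) : (ket p) q = if q = p then (1:ℂ) else 0 := by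
  rw [ket, lp.single_apply]
  split_ifs with h
  · subst h; simp
  · simp [h]

lemma inner_ket_left (p : ℤ × ℤ) (f : CCH) : ⟪ket p, f⟫ = f p := by
  rw [ket, lp.inner_single_left]
  simp [RCLike.inner_apply]

/-- indicator of the half-row `{(m,0) : m ≥ 1}` -/
def chi (p : ℤ × ℤ) : ℂ := if 1 ≤ p.1 ∧ p.2 = 0 then 1 else 0

lemma chi_norm_le (p : ℤ × ℤ) : ‖chi p‖ ≤ 1 := by
  rw [chi]; split_ifs <;> simp

lemma chi_mul_self (p : ℤ × ℤ) : chi p * chi p = chi p := by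
  rw [chi]; split_ifs <;> simp

lemma chi_conj (p : ℤ × ℤ) : conj (chi p) = chi p := by
  rw [chi]; split_ifs <;> simp

lemma chi_memℓp (x : CCH) : Memℓp (fun p => chi p * x p) 2 := by
  apply memℓp_gen
  have hx : Summable fun p => ‖x p‖ ^ (2:ℝ≥0∞).toReal := (lp.memℓp x).summable (by norm_num)
  refine hx.of_nonneg_of_le (fun p => Real.rpow_nonneg (norm_nonneg _) _) (fun p => ?_)
  refine Real.rpow_le_rpow (norm_nonneg _) ?_ ENNReal.toReal_nonneg
  rw [norm_mul]
  have h1 := chi_norm_le p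
  have h2 := norm_nonneg (x p)
  nlinarith

/-- P as a linear map -/
def PopL : CCH →ₗ[ℂ] CCH where
  toFun x := ⟨fun p => chi p * x p, chi_memℓp x⟩
  map_add' x y := by
    apply lp.ext
    funext p
    show chi p * (x + y) p = ((⟨fun p => chi p * x p, chi_memℓp x⟩ : CCH)
        + (⟨fun p => chi p * y p, chi_memℓp y⟩ : CCH)) p
    rw [coe_apply_add, coe_apply_add]
    show chi p * (x p + y p) = chi p * x p + chi p * y p
    ring
  map_smul' c x := by
    apply lp.ext
    funext p
    show chi p * (c • x) p = (c • (⟨fun p => chi p * x p, chi_memℓp x⟩ : CCH)) p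
    rw [coe_apply_smul, coe_apply_smul]
    show chi p * (c * x p) = c * (chi p * x p)
    ring

lemma PopL_norm (x : CCH) : ‖PopL x‖ ≤ 1 * ‖x‖ := by
  rw [one_mul]
  refine lp.norm_le_of_tsum_le (by norm_num) (norm_nonneg x) ?_
  rw [lp.norm_rpow_eq_tsum (by norm_num) x]
  refine Summable.tsum_le_tsum (fun p => ?_) ((lp.memℓp (PopL x)).summable (by norm_num))
    ((lp.memℓp x).summable (by norm_num))
  show ‖chi p * x p‖ ^ (2:ℝ≥0∞).toReal ≤ ‖x p‖ ^ (2:ℝ≥0∞).toReal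
  refine Real.rpow_le_rpow (norm_nonneg _) ?_ ENNReal.toReal_nonneg
  rw [norm_mul]
  have h1 := chi_norm_le p
  have h2 := norm_nonneg (x p)
  nlinarith

/-- The projection onto the half-row. -/
def Pop : CCH →L[ℂ] CCH := PopL.mkContinuous 1 PopL_norm

lemma Pop_apply (x : CCH) (p : ℤ × ℤ) : (Pop x) p = chi p * x p := rfl

lemma Pop_norm_le (y : CCH) : ‖Pop y‖ ≤ ‖y‖ := by
  have h := LinearMap.mkContinuous_norm_le PopL zero_le_one PopL_norm
  calc ‖Pop y‖ ≤ ‖Pop‖ * ‖y‖ := Pop.le_opNorm y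
    _ ≤ 1 * ‖y‖ := mul_le_mul_of_nonneg_right h (norm_nonneg y)
    _ = ‖y‖ := one_mul _

lemma Pop_sa : IsSelfAdjoint Pop := by
  rw [ContinuousLinearMap.isSelfAdjoint_iff_isSymmetric]
  intro x y
  show ⟪Pop x, y⟫ = ⟪x, Pop y⟫
  rw [lp.inner_eq_tsum, lp.inner_eq_tsum]
  refine tsum_congr fun p => ?_
  simp only [RCLike.inner_apply]
  show y p * conj ((Pop x) p) = (Pop y) p * conj (x p)
  rw [Pop_apply, Pop_apply, map_mul, chi_conj]
  ring

lemma Pop_idem : Pop * Pop = Pop := by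
  ext x p
  simp only [ContinuousLinearMap.mul_apply, Pop_apply]
  rw [← mul_assoc, chi_mul_self]

lemma solve2 {q r t xa xb : ℂ} (hq : q ≠ 0) (ht : t ≠ 0)
    (hrt : r * conj r + t * conj t = 1)
    (e1 : q * r * xa + q * conj t * xb = 0)
    (e2 : -(q * t) * xa + q * conj r * xb = 0) : xa = 0 ∧ xb = 0 := by
  have htc : conj t ≠ 0 := by
    intro h; apply ht
    have := congrArg conj h
    simpa using this
  have h1 : q * xa = 0 := by
    linear_combination (conj r) * e1 - (conj t) * e2 - (q * xa) * hrt
  have hxa : xa = 0 := (mul_eq_zero.mp h1).resolve_left hq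
  have h2 : q * conj t * xb = 0 := by
    rw [hxa] at e1; simpa using e1
  have hxb : xb = 0 := by
    rcases mul_eq_zero.mp h2 with h | h
    · exact absurd h (mul_ne_zero hq htc)
    · exact h
  exact ⟨hxa, hxb⟩

lemma sq_eq' {a b : ℝ} (ha : 0 ≤ a) (hb : 0 ≤ b) (h : a ^ 2 = b ^ 2) : a = b :=
  (sq_eq_sq₀ ha hb).mp h


set_option maxHeartbeats 4000000 in
/-- Let `U` be a Chalker–Coddington unitary with scattering matrices
`S_z = q_z [[r_z, −t_z], [t̄_z, r̄_z]]` satisfying `0 < c₁ < |r_z| < c₂ < 1` for all `z`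
(e.g. the critical model). Then there exists an orthogonal projection `P` such that the flux
`Φ = U*PU − P` has finite-dimensional eigenspaces `ker(Φ ∓ 1)` with
`dim ker(Φ − 1) ≠ dim ker(Φ + 1)`, i.e. `ind(Φ) ≠ 0`. -/
theorem stmt_19
    (q r t : Cell → ℂ) (S : Cell → Matrix (Fin 2) (Fin 2) ℂ)
    (hq : ∀ c, ‖q c‖ = 1) (hrt : ∀ c, ‖r c‖ ^ 2 + ‖t c‖ ^ 2 = 1)
    (hS : ∀ c, S c = q c • !![r c, -(t c); (starRingEnd ℂ) (t c), (starRingEnd ℂ) (r c)])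
    (c₁ c₂ : ℝ) (hc₁ : 0 < c₁) (hc₂ : c₂ < 1)
    (hr : ∀ c, c₁ < ‖r c‖ ∧ ‖r c‖ < c₂)
    (U : CCH →L[ℂ] CCH)
    (hUunit : adjoint U * U = 1 ∧ U * adjoint U = 1)
    (hUeven : ∀ j k : ℤ,
      U (ket (2 * j, 2 * k))
          = S (false, j, k) 0 0 • ket (2 * j, 2 * k - 1)
            + S (false, j, k) 0 1 • ket (2 * j + 1, 2 * k) ∧
      U (ket (2 * j + 1, 2 * k - 1))
          = S (false, j, k) 1 0 • ket (2 * j, 2 * k - 1)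
            + S (false, j, k) 1 1 • ket (2 * j + 1, 2 * k))
    (hUodd : ∀ j k : ℤ,
      U (ket (2 * j + 1, 2 * k))
          = S (true, j, k) 0 0 • ket (2 * j + 2, 2 * k)
            + S (true, j, k) 0 1 • ket (2 * j + 1, 2 * k + 1) ∧
      U (ket (2 * j + 2, 2 * k + 1))
          = S (true, j, k) 1 0 • ket (2 * j + 2, 2 * k)
            + S (true, j, k) 1 1 • ket (2 * j + 1, 2 * k + 1)) :
    ∃ P : CCH →L[ℂ] CCH,
      IsSelfAdjoint P ∧ P * P = P ∧
      FiniteDimensional ℂ (LinearMap.ker (((adjoint U * P * U - P - 1 : CCH →L[ℂ] CCH) : CCH →ₗ[ℂ] CCH))) ∧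
      FiniteDimensional ℂ (LinearMap.ker (((adjoint U * P * U - P + 1 : CCH →L[ℂ] CCH) : CCH →ₗ[ℂ] CCH))) ∧
      Module.finrank ℂ (LinearMap.ker (((adjoint U * P * U - P - 1 : CCH →L[ℂ] CCH) : CCH →ₗ[ℂ] CCH)))
        ≠ Module.finrank ℂ (LinearMap.ker (((adjoint U * P * U - P + 1 : CCH →L[ℂ] CCH) : CCH →ₗ[ℂ] CCH))) := by
  -- matrix entries
  have hS00 : ∀ c, S c 0 0 = q c * r c := by
    intro c; rw [hS c]; simp [Matrix.smul_apply]
  have hS01 : ∀ c, S c 0 1 = -(q c * t c) := by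
    intro c; rw [hS c]; simp [Matrix.smul_apply]
  have hS10 : ∀ c, S c 1 0 = q c * conj (t c) := by
    intro c; rw [hS c]; simp [Matrix.smul_apply]
  have hS11 : ∀ c, S c 1 1 = q c * conj (r c) := by
    intro c; rw [hS c]; simp [Matrix.smul_apply]
  -- nonvanishing
  have hq0 : ∀ c, q c ≠ 0 := by
    intro c h; have := hq c; rw [h] at this; simp at this
  have hr0 : ∀ c, r c ≠ 0 := by
    intro c h; have h1 := (hr c).1; rw [h] at h1; simp at h1; linarith
  have ht0 : ∀ c, t c ≠ 0 := by
    intro c h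
    have h1 := hrt c
    rw [h] at h1
    simp only [norm_zero] at h1
    nlinarith [(hr c).2, hc₂, norm_nonneg (r c)]
  have htc0 : ∀ c, conj (t c) ≠ 0 := by
    intro c h; apply ht0 c
    have := congrArg conj h; simpa using this
  have hrc0 : ∀ c, conj (r c) ≠ 0 := by
    intro c h; apply hr0 c
    have := congrArg conj h; simpa using this
  -- scalar identities
  have hqq : ∀ c, q c * conj (q c) = 1 := by
    intro c
    rw [Complex.mul_conj, Complex.normSq_eq_norm_sq, hq c]
    norm_num
  have hrt' : ∀ c, r c * conj (r c) + t c * conj (t c) = 1 := by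
    intro c
    rw [Complex.mul_conj, Complex.mul_conj, Complex.normSq_eq_norm_sq, Complex.normSq_eq_norm_sq]
    exact_mod_cast hrt c
  -- unitarity
  have hU1 : ∀ w : CCH, adjoint U (U w) = w := by
    intro w
    have h := congrArg (fun (A : CCH →L[ℂ] CCH) => A w) hUunit.1
    simpa [ContinuousLinearMap.mul_apply] using h
  have hU2 : ∀ w : CCH, U (adjoint U w) = w := by
    intro w
    have h := congrArg (fun (A : CCH →L[ℂ] CCH) => A w) hUunit.2
    simpa [ContinuousLinearMap.mul_apply] using h
  -- column orthonormality
  have hcol1 : ∀ c, conj (S c 0 0) * S c 0 0 + conj (S c 1 0) * S c 1 0 = 1 := by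
    intro c
    rw [hS00, hS10]
    simp only [map_mul, Complex.conj_conj]
    linear_combination (q c * conj (q c)) * (hrt' c) + hqq c
  have hcol2 : ∀ c, conj (S c 0 0) * S c 0 1 + conj (S c 1 0) * S c 1 1 = 0 := by
    intro c
    rw [hS00, hS01, hS10, hS11]
    simp only [map_mul, map_neg, Complex.conj_conj]
    ring
  have hcol3 : ∀ c, conj (S c 0 1) * S c 0 1 + conj (S c 1 1) * S c 1 1 = 1 := by
    intro c
    rw [hS01, hS11]
    simp only [map_mul, map_neg, Complex.conj_conj]
    linear_combination (q c * conj (q c)) * (hrt' c) + hqq c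
  have hcol4 : ∀ c, conj (S c 0 1) * S c 0 0 + conj (S c 1 1) * S c 1 0 = 0 := by
    intro c
    rw [hS00, hS01, hS10, hS11]
    simp only [map_mul, map_neg, Complex.conj_conj]
    ring
  -- adjoint on kets
  have hA1 : ∀ j k : ℤ, adjoint U (ket (2*j, 2*k-1))
      = conj (S (false,j,k) 0 0) • ket (2*j, 2*k) + conj (S (false,j,k) 1 0) • ket (2*j+1, 2*k-1) := by
    intro j k
    have key : U (conj (S (false,j,k) 0 0) • ket (2*j, 2*k)
        + conj (S (false,j,k) 1 0) • ket (2*j+1, 2*k-1)) = ket (2*j, 2*k-1) := by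
      rw [map_add, map_smul, map_smul, (hUeven j k).1, (hUeven j k).2]
      match_scalars
      · linear_combination hcol1 (false,j,k)
      · linear_combination hcol2 (false,j,k)
    rw [← key]; exact hU1 _
  have hA2 : ∀ j k : ℤ, adjoint U (ket (2*j+1, 2*k))
      = conj (S (false,j,k) 0 1) • ket (2*j, 2*k) + conj (S (false,j,k) 1 1) • ket (2*j+1, 2*k-1) := by
    intro j k
    have key : U (conj (S (false,j,k) 0 1) • ket (2*j, 2*k)
        + conj (S (false,j,k) 1 1) • ket (2*j+1, 2*k-1)) = ket (2*j+1, 2*k) := by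
      rw [map_add, map_smul, map_smul, (hUeven j k).1, (hUeven j k).2]
      match_scalars
      · linear_combination hcol4 (false,j,k)
      · linear_combination hcol3 (false,j,k)
    rw [← key]; exact hU1 _
  have hA3 : ∀ j k : ℤ, adjoint U (ket (2*j+2, 2*k))
      = conj (S (true,j,k) 0 0) • ket (2*j+1, 2*k) + conj (S (true,j,k) 1 0) • ket (2*j+2, 2*k+1) := by
    intro j k
    have key : U (conj (S (true,j,k) 0 0) • ket (2*j+1, 2*k)
        + conj (S (true,j,k) 1 0) • ket (2*j+2, 2*k+1)) = ket (2*j+2, 2*k) := by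
      rw [map_add, map_smul, map_smul, (hUodd j k).1, (hUodd j k).2]
      match_scalars
      · linear_combination hcol1 (true,j,k)
      · linear_combination hcol2 (true,j,k)
    rw [← key]; exact hU1 _
  have hA4 : ∀ j k : ℤ, adjoint U (ket (2*j+1, 2*k+1))
      = conj (S (true,j,k) 0 1) • ket (2*j+1, 2*k) + conj (S (true,j,k) 1 1) • ket (2*j+2, 2*k+1) := by
    intro j k
    have key : U (conj (S (true,j,k) 0 1) • ket (2*j+1, 2*k)
        + conj (S (true,j,k) 1 1) • ket (2*j+2, 2*k+1)) = ket (2*j+1, 2*k+1) := by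
      rw [map_add, map_smul, map_smul, (hUodd j k).1, (hUodd j k).2]
      match_scalars
      · linear_combination hcol4 (true,j,k)
      · linear_combination hcol3 (true,j,k)
    rw [← key]; exact hU1 _
  -- coordinates of U x
  have hY1 : ∀ (x : CCH) (j k : ℤ), (U x) (2*j, 2*k-1)
      = S (false,j,k) 0 0 * x (2*j, 2*k) + S (false,j,k) 1 0 * x (2*j+1, 2*k-1) := by
    intro x j k
    calc (U x) (2*j, 2*k-1) = ⟪ket (2*j, 2*k-1), U x⟫ := (inner_ket_left _ _).symm
      _ = ⟪adjoint U (ket (2*j, 2*k-1)), x⟫ := (adjoint_inner_left U x _).symm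
      _ = _ := by
        rw [hA1 j k, inner_add_left, inner_smul_left, inner_smul_left,
          inner_ket_left, inner_ket_left, Complex.conj_conj, Complex.conj_conj]
  have hY2 : ∀ (x : CCH) (j k : ℤ), (U x) (2*j+1, 2*k)
      = S (false,j,k) 0 1 * x (2*j, 2*k) + S (false,j,k) 1 1 * x (2*j+1, 2*k-1) := by
    intro x j k
    calc (U x) (2*j+1, 2*k) = ⟪ket (2*j+1, 2*k), U x⟫ := (inner_ket_left _ _).symm
      _ = ⟪adjoint U (ket (2*j+1, 2*k)), x⟫ := (adjoint_inner_left U x _).symm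
      _ = _ := by
        rw [hA2 j k, inner_add_left, inner_smul_left, inner_smul_left,
          inner_ket_left, inner_ket_left, Complex.conj_conj, Complex.conj_conj]
  have hY3 : ∀ (x : CCH) (j k : ℤ), (U x) (2*j+2, 2*k)
      = S (true,j,k) 0 0 * x (2*j+1, 2*k) + S (true,j,k) 1 0 * x (2*j+2, 2*k+1) := by
    intro x j k
    calc (U x) (2*j+2, 2*k) = ⟪ket (2*j+2, 2*k), U x⟫ := (inner_ket_left _ _).symm
      _ = ⟪adjoint U (ket (2*j+2, 2*k)), x⟫ := (adjoint_inner_left U x _).symm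
      _ = _ := by
        rw [hA3 j k, inner_add_left, inner_smul_left, inner_smul_left,
          inner_ket_left, inner_ket_left, Complex.conj_conj, Complex.conj_conj]
  have hY4 : ∀ (x : CCH) (j k : ℤ), (U x) (2*j+1, 2*k+1)
      = S (true,j,k) 0 1 * x (2*j+1, 2*k) + S (true,j,k) 1 1 * x (2*j+2, 2*k+1) := by
    intro x j k
    calc (U x) (2*j+1, 2*k+1) = ⟪ket (2*j+1, 2*k+1), U x⟫ := (inner_ket_left _ _).symm
      _ = ⟪adjoint U (ket (2*j+1, 2*k+1)), x⟫ := (adjoint_inner_left U x _).symm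
      _ = _ := by
        rw [hA4 j k, inner_add_left, inner_smul_left, inner_smul_left,
          inner_ket_left, inner_ket_left, Complex.conj_conj, Complex.conj_conj]
  -- projection facts
  have hPadj : adjoint Pop = Pop := ContinuousLinearMap.isSelfAdjoint_iff'.mp Pop_sa
  have hinnerP : ∀ y : CCH, ⟪y, Pop y⟫ = (‖Pop y‖ : ℂ) ^ 2 := by
    intro y
    calc ⟪y, Pop y⟫ = ⟪y, Pop (Pop y)⟫ := by
          conv_lhs => rw [show Pop y = Pop (Pop y) by
            rw [← ContinuousLinearMap.mul_apply, Pop_idem]]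
      _ = ⟪adjoint Pop y, Pop y⟫ := (adjoint_inner_left Pop (Pop y) y).symm
      _ = ⟪Pop y, Pop y⟫ := by rw [hPadj]
      _ = (‖Pop y‖ : ℂ) ^ 2 := inner_self_eq_norm_sq_to_K _
  have hUnorm : ∀ y : CCH, ‖U y‖ = ‖y‖ := by
    intro y
    have h : ⟪adjoint U (U y), y⟫ = ⟪U y, U y⟫ := adjoint_inner_left U y (U y)
    rw [hU1 y] at h
    rw [inner_self_eq_norm_sq_to_K, inner_self_eq_norm_sq_to_K] at h
    have h2 : ‖U y‖ ^ 2 = ‖y‖ ^ 2 := by exact_mod_cast h.symm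
    exact sq_eq' (norm_nonneg _) (norm_nonneg _) h2
  -- kernel characterizations
  have hk1iff : ∀ x : CCH, (adjoint U * Pop * U - Pop - 1) x = 0
      ↔ (Pop x = 0 ∧ Pop (U x) = U x) := by
    intro x
    constructor
    · intro hx
      have h0 : adjoint U (Pop (U x)) - Pop x - x = 0 := by
        simpa [ContinuousLinearMap.sub_apply, ContinuousLinearMap.mul_apply,
          ContinuousLinearMap.one_apply] using hx
      rw [sub_sub] at h0
      have heq : adjoint U (Pop (U x)) = Pop x + x := sub_eq_zero.mp h0
      have hinner : (‖Pop (U x)‖ : ℂ) ^ 2 = (‖Pop x‖ : ℂ) ^ 2 + (‖x‖ : ℂ) ^ 2 := by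
        calc (‖Pop (U x)‖ : ℂ) ^ 2 = ⟪U x, Pop (U x)⟫ := (hinnerP _).symm
          _ = ⟪x, adjoint U (Pop (U x))⟫ := (adjoint_inner_right U x _).symm
          _ = ⟪x, Pop x + x⟫ := by rw [heq]
          _ = ⟪x, Pop x⟫ + ⟪x, x⟫ := inner_add_right _ _ _
          _ = (‖Pop x‖ : ℂ) ^ 2 + (‖x‖ : ℂ) ^ 2 := by
            rw [hinnerP, inner_self_eq_norm_sq_to_K]
            rfl
      have hreal : ‖Pop (U x)‖ ^ 2 = ‖Pop x‖ ^ 2 + ‖x‖ ^ 2 := by exact_mod_cast hinner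
      have hle : ‖Pop (U x)‖ ≤ ‖x‖ := by
        calc ‖Pop (U x)‖ ≤ ‖U x‖ := Pop_norm_le _
          _ = ‖x‖ := hUnorm x
      have hPx0 : Pop x = 0 := by
        have hsq : ‖Pop (U x)‖ ^ 2 ≤ ‖x‖ ^ 2 := by
          nlinarith [norm_nonneg (Pop (U x)), norm_nonneg x]
        have h1 : ‖Pop x‖ ^ 2 ≤ 0 := by linarith
        have h2 : ‖Pop x‖ = 0 :=
          le_antisymm (by nlinarith [norm_nonneg (Pop x)]) (norm_nonneg _)
        exact norm_eq_zero.mp h2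
      refine ⟨hPx0, ?_⟩
      rw [hPx0, zero_add] at heq
      have h2 := congrArg U heq
      rw [hU2] at h2
      exact h2
    · rintro ⟨h1, h2⟩
      simp [ContinuousLinearMap.sub_apply, ContinuousLinearMap.mul_apply,
        ContinuousLinearMap.one_apply, h2, h1, hU1 x]
  have hk2iff : ∀ x : CCH, (adjoint U * Pop * U - Pop + 1) x = 0
      ↔ (Pop x = x ∧ Pop (U x) = 0) := by
    intro x
    constructor
    · intro hx
      have h0 : adjoint U (Pop (U x)) - Pop x + x = 0 := by
        simpa [ContinuousLinearMap.add_apply, ContinuousLinearMap.sub_apply,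
          ContinuousLinearMap.mul_apply, ContinuousLinearMap.one_apply] using hx
      have h1 : adjoint U (Pop (U x)) + x = Pop x := by
        rw [← sub_eq_zero, add_sub_right_comm]; exact h0
      have heq : adjoint U (Pop (U x)) = Pop x - x := eq_sub_of_add_eq h1
      have hinner : (‖Pop (U x)‖ : ℂ) ^ 2 = (‖Pop x‖ : ℂ) ^ 2 - (‖x‖ : ℂ) ^ 2 := by
        calc (‖Pop (U x)‖ : ℂ) ^ 2 = ⟪U x, Pop (U x)⟫ := (hinnerP _).symm
          _ = ⟪x, adjoint U (Pop (U x))⟫ := (adjoint_inner_right U x _).symm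
          _ = ⟪x, Pop x - x⟫ := by rw [heq]
          _ = ⟪x, Pop x⟫ - ⟪x, x⟫ := inner_sub_right _ _ _
          _ = (‖Pop x‖ : ℂ) ^ 2 - (‖x‖ : ℂ) ^ 2 := by
            rw [hinnerP, inner_self_eq_norm_sq_to_K]
            rfl
      have hreal : ‖Pop (U x)‖ ^ 2 = ‖Pop x‖ ^ 2 - ‖x‖ ^ 2 := by exact_mod_cast hinner
      have hle : ‖Pop x‖ ≤ ‖x‖ := Pop_norm_le x
      have hPUx0 : Pop (U x) = 0 := by
        have hsq : ‖Pop x‖ ^ 2 ≤ ‖x‖ ^ 2 := by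
          nlinarith [norm_nonneg (Pop x), norm_nonneg x]
        have ha : ‖Pop (U x)‖ ^ 2 ≤ 0 := by linarith
        have h2 : ‖Pop (U x)‖ = 0 :=
          le_antisymm (by nlinarith [norm_nonneg (Pop (U x))]) (norm_nonneg _)
        exact norm_eq_zero.mp h2
      rw [hPUx0, map_zero] at heq
      exact ⟨sub_eq_zero.mp heq.symm, hPUx0⟩
    · rintro ⟨h1, h2⟩
      simp [ContinuousLinearMap.add_apply, ContinuousLinearMap.sub_apply,
        ContinuousLinearMap.mul_apply, ContinuousLinearMap.one_apply, h2, h1]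
  -- the special vector
  set v : CCH := conj (t (false,0,0)) • ket (0,0) - r (false,0,0) • ket (1,-1) with hvdef
  have hvne : v ≠ 0 := by
    intro h
    have h2 := congrArg (fun f : CCH => (f : ∀ _ : ℤ × ℤ, ℂ) ((1:ℤ),(-1:ℤ))) h
    simp only [hvdef] at h2
    rw [coe_apply_sub, coe_apply_smul, coe_apply_smul, ket_apply, ket_apply, coe_apply_zero] at h2
    rw [if_neg (by simp), if_pos rfl] at h2
    simp only [mul_zero, mul_one, zero_sub, neg_eq_zero] at h2
    exact hr0 _ h2
  have hker1 : LinearMap.ker (((adjoint U * Pop * U - Pop - 1 : CCH →L[ℂ] CCH) : CCH →ₗ[ℂ] CCH)) = Submodule.span ℂ {v} := by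
    apply le_antisymm
    · intro x hx
      rw [LinearMap.mem_ker] at hx
      obtain ⟨hPx, hPUx⟩ := (hk1iff x).mp hx
      have hx0 : ∀ m : ℤ, 1 ≤ m → x (m, 0) = 0 := by
        intro m hm
        have h := congrArg (fun f : CCH => (f : ∀ _ : ℤ × ℤ, ℂ) (m, 0)) hPx
        simp only [] at h
        rw [Pop_apply, coe_apply_zero] at h
        rw [show chi (m, 0) = 1 from if_pos ⟨hm, rfl⟩, one_mul] at h
        exact h
      have hz : ∀ p : ℤ × ℤ, ¬(1 ≤ p.1 ∧ p.2 = 0) → (U x) p = 0 := by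
        intro p hp
        have h := congrArg (fun f : CCH => (f : ∀ _ : ℤ × ℤ, ℂ) p) hPUx
        simp only [] at h
        rw [Pop_apply] at h
        rw [show chi p = 0 from if_neg hp, zero_mul] at h
        exact h.symm
      have hD1 : ∀ j k : ℤ, ¬(k = 0 ∧ 0 ≤ j) → x (2*j, 2*k) = 0 ∧ x (2*j+1, 2*k-1) = 0 := by
        intro j k hc
        have hz1 : ¬((1:ℤ) ≤ 2*j ∧ 2*k-1 = 0) := by omega
        have hz2 : ¬((1:ℤ) ≤ 2*j+1 ∧ 2*k = 0) := by
          rintro ⟨ha, hb⟩; exact hc ⟨by omega, by omega⟩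
        have e1 : S (false,j,k) 0 0 * x (2*j, 2*k) + S (false,j,k) 1 0 * x (2*j+1, 2*k-1) = 0 := by
          rw [← hY1 x j k]; exact hz (2*j, 2*k-1) hz1
        have e2 : S (false,j,k) 0 1 * x (2*j, 2*k) + S (false,j,k) 1 1 * x (2*j+1, 2*k-1) = 0 := by
          rw [← hY2 x j k]; exact hz (2*j+1, 2*k) hz2
        rw [hS00, hS10] at e1
        rw [hS01, hS11] at e2
        exact solve2 (hq0 _) (ht0 _) (hrt' _) e1 e2
      have hD2 : ∀ j k : ℤ, ¬(k = 0 ∧ 0 ≤ j) → x (2*j+1, 2*k) = 0 ∧ x (2*j+2, 2*k+1) = 0 := by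
        intro j k hc
        have hz1 : ¬((1:ℤ) ≤ 2*j+2 ∧ 2*k = 0) := by
          rintro ⟨ha, hb⟩; exact hc ⟨by omega, by omega⟩
        have hz2 : ¬((1:ℤ) ≤ 2*j+1 ∧ 2*k+1 = 0) := by omega
        have e1 : S (true,j,k) 0 0 * x (2*j+1, 2*k) + S (true,j,k) 1 0 * x (2*j+2, 2*k+1) = 0 := by
          rw [← hY3 x j k]; exact hz (2*j+2, 2*k) hz1
        have e2 : S (true,j,k) 0 1 * x (2*j+1, 2*k) + S (true,j,k) 1 1 * x (2*j+2, 2*k+1) = 0 := by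
          rw [← hY4 x j k]; exact hz (2*j+1, 2*k+1) hz2
        rw [hS00, hS10] at e1
        rw [hS01, hS11] at e2
        exact solve2 (hq0 _) (ht0 _) (hrt' _) e1 e2
      have hD3 : ∀ j : ℤ, 1 ≤ j → x (2*j+1, -1) = 0 := by
        intro j hj
        have h := hY1 x j 0
        rw [show ((2:ℤ)*0-1) = -1 from by norm_num, show ((2:ℤ)*0) = 0 from by norm_num] at h
        rw [hz (2*j, -1) (by omega), hx0 (2*j) (by omega), mul_zero, zero_add] at h
        rw [hS10] at h
        rcases mul_eq_zero.mp h.symm with h' | h'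
        · exact absurd h' (mul_ne_zero (hq0 _) (htc0 _))
        · exact h'
      have hD4 : ∀ j : ℤ, 0 ≤ j → x (2*j+2, 1) = 0 := by
        intro j hj
        have h := hY4 x j 0
        rw [show ((2:ℤ)*0+1) = 1 from by norm_num, show ((2:ℤ)*0) = 0 from by norm_num] at h
        rw [hz (2*j+1, 1) (by omega), hx0 (2*j+1) (by omega), mul_zero, zero_add] at h
        rw [hS11] at h
        rcases mul_eq_zero.mp h.symm with h' | h'
        · exact absurd h' (mul_ne_zero (hq0 _) (hrc0 _))
        · exact h'
      have hRel : S (false,0,0) 0 0 * x (0, 0) + S (false,0,0) 1 0 * x (1, -1) = 0 := by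
        have h := hY1 x 0 0
        rw [show ((2:ℤ)*0-1) = -1 from by norm_num, show ((2:ℤ)*0+1) = 1 from by norm_num,
          show ((2:ℤ)*0) = 0 from by norm_num] at h
        rw [hz (0, -1) (by omega)] at h
        exact h.symm
      have hxall : ∀ p : ℤ × ℤ, p ≠ ((0:ℤ),(0:ℤ)) → p ≠ ((1:ℤ),(-1:ℤ)) → x p = 0 := by
        rintro ⟨m, n⟩ hne0 hne1
        rcases Int.even_or_odd m with ⟨j, hj⟩ | ⟨j, hj⟩ <;>
          rcases Int.even_or_odd n with ⟨k, hk⟩ | ⟨k, hk⟩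
        · -- m even, n even
          by_cases hc : k = 0 ∧ 0 ≤ j
          · by_cases hj0 : j = 0
            · exact absurd (by simp only [Prod.mk.injEq]; omega : ((m,n) : ℤ×ℤ) = ((0:ℤ),(0:ℤ))) hne0
            · have hn : n = 0 := by omega
              rw [hn]
              exact hx0 m (by omega)
          · have hkey := (hD1 j k hc).1
            have hp : ((m,n) : ℤ×ℤ) = ((2*j:ℤ), (2*k:ℤ)) := by simp only [Prod.mk.injEq]; omega
            rw [hp]; exact hkey
        · -- m even, n odd
          by_cases hc : k = 0 ∧ 0 ≤ j - 1
          · have hkey := hD4 (j-1) (by omega)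
            have hp : ((m,n) : ℤ×ℤ) = ((2*(j-1)+2:ℤ), (1:ℤ)) := by simp only [Prod.mk.injEq]; omega
            rw [hp]; exact hkey
          · have hkey := (hD2 (j-1) k hc).2
            have hp : ((m,n) : ℤ×ℤ) = ((2*(j-1)+2:ℤ), (2*k+1:ℤ)) := by
              simp only [Prod.mk.injEq]; omega
            rw [hp]; exact hkey
        · -- m odd, n even
          by_cases hc : k = 0 ∧ 0 ≤ j
          · have hn : n = 0 := by omega
            rw [hn]
            exact hx0 m (by omega)
          · have hkey := (hD2 j k hc).1
            have hp : ((m,n) : ℤ×ℤ) = ((2*j+1:ℤ), (2*k:ℤ)) := by simp only [Prod.mk.injEq]; omega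
            rw [hp]; exact hkey
        · -- m odd, n odd
          by_cases hc : k + 1 = 0 ∧ 0 ≤ j
          · by_cases hj0 : j = 0
            · exact absurd (by simp only [Prod.mk.injEq]; omega : ((m,n) : ℤ×ℤ) = ((1:ℤ),(-1:ℤ))) hne1
            · have hkey := hD3 j (by omega)
              have hp : ((m,n) : ℤ×ℤ) = ((2*j+1:ℤ), (-1:ℤ)) := by simp only [Prod.mk.injEq]; omega
              rw [hp]; exact hkey
          · have hkey := (hD1 j (k+1) hc).2
            have hp : ((m,n) : ℤ×ℤ) = ((2*j+1:ℤ), (2*(k+1)-1:ℤ)) := by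
              simp only [Prod.mk.injEq]; omega
            rw [hp]; exact hkey
      have hxrep : x = x ((0:ℤ),(0:ℤ)) • ket (0,0) + x ((1:ℤ),(-1:ℤ)) • ket (1,-1) := by
        apply lp.ext
        funext p
        rw [coe_apply_add, coe_apply_smul, coe_apply_smul, ket_apply, ket_apply]
        by_cases h0 : p = ((0:ℤ),(0:ℤ))
        · rw [if_pos h0, if_neg (by rw [h0]; decide), h0]; ring
        · by_cases h1 : p = ((1:ℤ),(-1:ℤ))
          · rw [if_neg h0, if_pos h1, h1]; ring
          · rw [if_neg h0, if_neg h1, hxall p h0 h1]; ring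
      rw [Submodule.mem_span_singleton]
      refine ⟨x ((0:ℤ),(0:ℤ)) / conj (t (false,0,0)), ?_⟩
      have hrel2 : r (false,0,0) * x ((0:ℤ),(0:ℤ)) + conj (t (false,0,0)) * x ((1:ℤ),(-1:ℤ)) = 0 := by
        rw [hS00, hS10] at hRel
        have h3 : q (false,0,0) * (r (false,0,0) * x ((0:ℤ),(0:ℤ))
            + conj (t (false,0,0)) * x ((1:ℤ),(-1:ℤ))) = 0 := by linear_combination hRel
        exact (mul_eq_zero.mp h3).resolve_left (hq0 _)
      have ha1 : x ((0:ℤ),(0:ℤ)) / conj (t (false,0,0)) * conj (t (false,0,0))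
          = x ((0:ℤ),(0:ℤ)) := div_mul_cancel₀ _ (htc0 _)
      have ha2 : -(x ((0:ℤ),(0:ℤ)) / conj (t (false,0,0)) * r (false,0,0))
          = x ((1:ℤ),(-1:ℤ)) := by
        rw [div_mul_eq_mul_div, ← neg_div, div_eq_iff (htc0 _)]
        linear_combination -hrel2
      conv_rhs => rw [hxrep]
      rw [hvdef, smul_sub, smul_smul, smul_smul, sub_eq_add_neg, ← neg_smul, ha1, ha2]
    · rw [Submodule.span_le, Set.singleton_subset_iff, SetLike.mem_coe, LinearMap.mem_ker]
      apply (hk1iff v).mpr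
      have hU00 : U (ket (0,0)) = S (false,0,0) 0 0 • ket (0,-1) + S (false,0,0) 0 1 • ket (1,0) := by
        have h := (hUeven 0 0).1
        simp only [show (2:ℤ)*0 - 1 = -1 from by norm_num, show (2:ℤ)*0 = 0 from by norm_num,
          show (2:ℤ)*0 + 1 = 1 from by norm_num] at h
        exact h
      have hU1m1 : U (ket (1,-1)) = S (false,0,0) 1 0 • ket (0,-1) + S (false,0,0) 1 1 • ket (1,0) := by
        have h := (hUeven 0 0).2
        simp only [show (2:ℤ)*0 - 1 = -1 from by norm_num, show (2:ℤ)*0 = 0 from by norm_num,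
          show (2:ℤ)*0 + 1 = 1 from by norm_num] at h
        exact h
      constructor
      · apply lp.ext
        funext p
        rw [Pop_apply, coe_apply_zero, hvdef]
        rw [coe_apply_sub, coe_apply_smul, coe_apply_smul, ket_apply, ket_apply]
        by_cases hc : 1 ≤ p.1 ∧ p.2 = 0
        · rw [if_neg (by rintro rfl; exact absurd hc (by norm_num)),
            if_neg (by rintro rfl; exact absurd hc (by norm_num))]
          ring
        · rw [show chi p = 0 from if_neg hc]; ring
      · have hUv : U v = (conj (t (false,0,0)) * S (false,0,0) 0 1
            - r (false,0,0) * S (false,0,0) 1 1) • ket (1, 0) := by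
          rw [hvdef, map_sub, map_smul, map_smul, hU00, hU1m1]
          match_scalars
          · rw [hS00, hS10]; ring
          · ring
        rw [hUv, map_smul]
        congr 1
        apply lp.ext
        funext p
        rw [Pop_apply, ket_apply]
        by_cases hp : p = ((1:ℤ),(0:ℤ))
        · rw [if_pos hp, hp, show chi ((1:ℤ),(0:ℤ)) = 1 from if_pos (by norm_num)]
          ring
        · rw [if_neg hp]; ring
  have hker2 : LinearMap.ker (((adjoint U * Pop * U - Pop + 1 : CCH →L[ℂ] CCH) : CCH →ₗ[ℂ] CCH)) = ⊥ := by
    rw [Submodule.eq_bot_iff]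
    intro x hx
    rw [LinearMap.mem_ker] at hx
    obtain ⟨hPx, hPUx⟩ := (hk2iff x).mp hx
    have hx0' : ∀ p : ℤ × ℤ, ¬(1 ≤ p.1 ∧ p.2 = 0) → x p = 0 := by
      intro p hp
      have h := congrArg (fun f : CCH => (f : ∀ _ : ℤ × ℤ, ℂ) p) hPx
      simp only [] at h
      rw [Pop_apply] at h
      rw [show chi p = 0 from if_neg hp, zero_mul] at h
      exact h.symm
    have hz0 : ∀ p : ℤ × ℤ, (1 ≤ p.1 ∧ p.2 = 0) → (U x) p = 0 := by
      intro p hp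
      have h := congrArg (fun f : CCH => (f : ∀ _ : ℤ × ℤ, ℂ) p) hPUx
      simp only [] at h
      rw [Pop_apply, coe_apply_zero] at h
      rw [show chi p = 1 from if_pos hp, one_mul] at h
      exact h
    have hF1 : ∀ j : ℤ, 0 ≤ j → x (2*j+1, 0) = 0 := by
      intro j hj
      have h := hY3 x j 0
      rw [show ((2:ℤ)*0+1) = 1 from by norm_num, show ((2:ℤ)*0) = 0 from by norm_num] at h
      rw [hz0 (2*j+2, 0) ⟨by omega, rfl⟩, hx0' (2*j+2, 1) (by omega), mul_zero, add_zero] at h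
      rw [hS00] at h
      rcases mul_eq_zero.mp h.symm with h' | h'
      · exact absurd h' (mul_ne_zero (hq0 _) (hr0 _))
      · exact h'
    have hF2 : ∀ j : ℤ, 1 ≤ j → x (2*j, 0) = 0 := by
      intro j hj
      have h := hY2 x j 0
      rw [show ((2:ℤ)*0-1) = -1 from by norm_num, show ((2:ℤ)*0) = 0 from by norm_num] at h
      rw [hz0 (2*j+1, 0) ⟨by omega, rfl⟩, hx0' (2*j+1, -1) (by omega), mul_zero, add_zero] at h
      rw [hS01] at h
      rcases mul_eq_zero.mp h.symm with h' | h'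
      · exact absurd h' (neg_ne_zero.mpr (mul_ne_zero (hq0 _) (ht0 _)))
      · exact h'
    apply lp.ext
    funext p
    obtain ⟨m, n⟩ := p
    rw [coe_apply_zero]
    by_cases hc : 1 ≤ m ∧ n = 0
    · rcases Int.even_or_odd m with ⟨j, hj⟩ | ⟨j, hj⟩
      · have hkey := hF2 j (by omega)
        have hp : ((m,n) : ℤ×ℤ) = ((2*j:ℤ), (0:ℤ)) := by simp only [Prod.mk.injEq]; omega
        rw [hp]; exact hkey
      · have hkey := hF1 j (by omega)
        have hp : ((m,n) : ℤ×ℤ) = ((2*j+1:ℤ), (0:ℤ)) := by simp only [Prod.mk.injEq]; omega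
        rw [hp]; exact hkey
    · exact hx0' (m,n) hc
  refine ⟨Pop, Pop_sa, Pop_idem, ?_, ?_, ?_⟩
  · rw [hker1]
    exact FiniteDimensional.span_of_finite ℂ (Set.finite_singleton v)
  · rw [hker2]
    infer_instance
  · rw [hker1, hker2, finrank_span_singleton hvne, finrank_bot]
    exact one_ne_zero
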